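/- In the Poincaré disc model, the hyperbolic distance between points x1=(r1,φ1), x2=(r2,φ2) in Euclidean polar coordinates equals ln((1+A)/(1−A)), where A² = 1 − 8/((2−β²)(t+1/t)² + β²(s+1/s)²), with β² = 1 − cos(φ1−φ2), s² = e^{ρ1+ρ2}, t² = e^{ρ1−ρ2}, and ρi the hyperbolic distance of xi from the origin. -/

import Mathlib

noncomputable section

lemma four_le_sq_add_inv (x : ℝ) (hx : 0 < x) : (4:ℝ) ≤ (x + 1/x)^2 := by
  have h0 := sq_nonneg (x - 1/x)
  have hx1 : x * (1/x) = 1 := by field_simp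
  nlinarith [h0, hx1]

/-- The quantity `A` with `A² = 1 - 8 / ((2 - β²)(t + 1/t)² + β²(s + 1/s)²)`,
where `β² = 1 - cos φ`, `s² = e^{ρ1+ρ2}`, `t² = e^{ρ1-ρ2}`. -/
noncomputable def Aval (ρ1 ρ2 φ : ℝ) : ℝ :=
  Real.sqrt (1 - 8 /
    ((2 - (1 - Real.cos φ)) *
        (Real.exp ((ρ1 - ρ2) / 2) + 1 / Real.exp ((ρ1 - ρ2) / 2)) ^ 2 +
      (1 - Real.cos φ) *
        (Real.exp ((ρ1 + ρ2) / 2) + 1 / Real.exp ((ρ1 + ρ2) / 2)) ^ 2))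

/-- in the Poincaré unit disc model, the hyperbolic distance
`ln[(|1 - x1 conj x2| + |x1 - x2|) / (|1 - x1 conj x2| - |x1 - x2|)]` between
`x1 = (r1, φ1)` and `x2 = (r2, φ2)` equals `ln((1 + A)/(1 - A))`, where
`ρi` is the hyperbolic distance of `xi` from the origin, i.e.
`ri = (e^{ρi} - 1)/(e^{ρi} + 1)`. -/
theorem poincare_distance_formula (x1 x2 : ℂ)
    (h1 : ‖x1‖ < 1) (h2 : ‖x2‖ < 1)
    (ρ1 ρ2 : ℝ) (hρ1 : 0 ≤ ρ1) (hρ2 : 0 ≤ ρ2)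
    (hr1 : ‖x1‖ = (Real.exp ρ1 - 1) / (Real.exp ρ1 + 1))
    (hr2 : ‖x2‖ = (Real.exp ρ2 - 1) / (Real.exp ρ2 + 1)) :
    Real.log ((‖1 - x1 * (starRingEnd ℂ) x2‖ + ‖x1 - x2‖) /
        (‖1 - x1 * (starRingEnd ℂ) x2‖ - ‖x1 - x2‖)) =
      Real.log ((1 + Aval ρ1 ρ2 (Complex.arg x1 - Complex.arg x2)) /
        (1 - Aval ρ1 ρ2 (Complex.arg x1 - Complex.arg x2))) := by
  have hre1 : x1.re = ‖x1‖ * Real.cos x1.arg := by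
    conv_lhs => rw [← Complex.norm_mul_cos_add_sin_mul_I x1]
    simp [← Complex.ofReal_cos, ← Complex.ofReal_sin]
  have him1 : x1.im = ‖x1‖ * Real.sin x1.arg := by
    conv_lhs => rw [← Complex.norm_mul_cos_add_sin_mul_I x1]
    simp [← Complex.ofReal_cos, ← Complex.ofReal_sin]
  have hre2 : x2.re = ‖x2‖ * Real.cos x2.arg := by
    conv_lhs => rw [← Complex.norm_mul_cos_add_sin_mul_I x2]
    simp [← Complex.ofReal_cos, ← Complex.ofReal_sin]
  have him2 : x2.im = ‖x2‖ * Real.sin x2.arg := by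
    conv_lhs => rw [← Complex.norm_mul_cos_add_sin_mul_I x2]
    simp [← Complex.ofReal_cos, ← Complex.ofReal_sin]
  set r1 : ℝ := ‖x1‖ with hr1def
  set r2 : ℝ := ‖x2‖ with hr2def
  set φ : ℝ := Complex.arg x1 - Complex.arg x2 with hφ
  set c : ℝ := Real.cos φ with hc
  set a : ℝ := ‖1 - x1 * (starRingEnd ℂ) x2‖ with ha
  set b : ℝ := ‖x1 - x2‖ with hb
  have hr1nn : 0 ≤ r1 := norm_nonneg x1
  have hr2nn : 0 ≤ r2 := norm_nonneg x2
  have hc1 : -1 ≤ c := Real.neg_one_le_cos φ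
  have hc2 : c ≤ 1 := Real.cos_le_one φ
  have hbnn : 0 ≤ b := norm_nonneg _
  have hann : 0 ≤ a := norm_nonneg _
  clear_value r1 r2 φ c a b
  have hcos : c = Real.cos x1.arg * Real.cos x2.arg + Real.sin x1.arg * Real.sin x2.arg := by
    rw [hc, hφ, Real.cos_sub]
  have hs1 := Real.sin_sq_add_cos_sq x1.arg
  have hs2 := Real.sin_sq_add_cos_sq x2.arg
  have hb2 : b ^ 2 = r1 ^ 2 + r2 ^ 2 - 2 * r1 * r2 * c := by
    rw [hb, Complex.sq_norm, Complex.normSq_apply]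
    simp only [Complex.sub_re, Complex.sub_im]
    rw [hre1, him1, hre2, him2, hcos]
    linear_combination r1 ^ 2 * hs1 + r2 ^ 2 * hs2
  have ha2 : a ^ 2 = 1 + (r1 * r2) ^ 2 - 2 * r1 * r2 * c := by
    rw [ha, Complex.sq_norm, Complex.normSq_apply]
    simp only [Complex.sub_re, Complex.sub_im, Complex.one_re, Complex.one_im,
      Complex.mul_re, Complex.mul_im, Complex.conj_re, Complex.conj_im]
    rw [hre1, him1, hre2, him2, hcos]
    linear_combination r1 ^ 2 * r2 ^ 2 *
      ((Real.sin x2.arg ^ 2 + Real.cos x2.arg ^ 2) * hs1 + hs2)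
  have hdiff : a ^ 2 - b ^ 2 = (1 - r1 ^ 2) * (1 - r2 ^ 2) := by
    rw [ha2, hb2]; ring
  have e1 : r1 ^ 2 < 1 := pow_lt_one₀ hr1nn h1 two_ne_zero
  have e2 : r2 ^ 2 < 1 := pow_lt_one₀ hr2nn h2 two_ne_zero
  have hdpos : 0 < (1 - r1 ^ 2) * (1 - r2 ^ 2) :=
    mul_pos (by linarith) (by linarith)
  have ha2pos : 0 < a ^ 2 := by linarith [sq_nonneg b]
  have hapos : 0 < a := by
    rcases hann.lt_or_eq with h | h
    · exact h
    · rw [← h] at ha2pos; simp at ha2pos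
  have hba : b < a := by
    apply lt_of_pow_lt_pow_left₀ 2 hann
    linarith [sq_nonneg b]
  -- exponentials
  set u : ℝ := Real.exp (ρ1 / 2) with hu
  set v : ℝ := Real.exp (ρ2 / 2) with hv
  have hupos : 0 < u := Real.exp_pos _
  have hvpos : 0 < v := Real.exp_pos _
  clear_value u v
  have hu2 : Real.exp ρ1 = u ^ 2 := by
    rw [hu, sq, ← Real.exp_add, add_halves]
  have hv2 : Real.exp ρ2 = v ^ 2 := by
    rw [hv, sq, ← Real.exp_add, add_halves]
  have hsub : Real.exp ((ρ1 - ρ2) / 2) = u / v := by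
    rw [hu, hv, ← Real.exp_sub]; congr 1; ring
  have hadd : Real.exp ((ρ1 + ρ2) / 2) = u * v := by
    rw [hu, hv, ← Real.exp_add]; congr 1; ring
  have hr1u : r1 = (u ^ 2 - 1) / (u ^ 2 + 1) := by rw [hr1, hu2]
  have hr2v : r2 = (v ^ 2 - 1) / (v ^ 2 + 1) := by rw [hr2, hv2]
  set D : ℝ := (2 - (1 - c)) * (Real.exp ((ρ1 - ρ2) / 2) + 1 / Real.exp ((ρ1 - ρ2) / 2)) ^ 2 +
      (1 - c) * (Real.exp ((ρ1 + ρ2) / 2) + 1 / Real.exp ((ρ1 + ρ2) / 2)) ^ 2 with hD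
  clear_value D
  have hDval : D = (1 + c) * (u / v + v / u) ^ 2 + (1 - c) * (u * v + 1 / (u * v)) ^ 2 := by
    rw [hD, hsub, hadd]
    rw [one_div_div]; ring
  have hDpos : 0 < D := by
    rw [hDval]
    have h4 : (4 : ℝ) ≤ (u / v + v / u) ^ 2 := by
      have h' := four_le_sq_add_inv (u / v) (by positivity)
      rwa [one_div_div] at h'
    have h5 : (4 : ℝ) ≤ (u * v + 1 / (u * v)) ^ 2 :=
      four_le_sq_add_inv (u * v) (by positivity)
    have m4 := mul_le_mul_of_nonneg_left h4 (by linarith : (0:ℝ) ≤ 1 + c)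
    have m5 := mul_le_mul_of_nonneg_left h5 (by linarith : (0:ℝ) ≤ 1 - c)
    linarith
  -- key identity
  have key2 : D * (a ^ 2 - b ^ 2) = 8 * a ^ 2 := by
    rw [hb2, ha2, hDval, hr1u, hr2v]
    field_simp
    ring
  have h8 : 8 / D * a ^ 2 = a ^ 2 - b ^ 2 := by
    rw [div_mul_eq_mul_div, div_eq_iff hDpos.ne']
    linear_combination -key2
  have hkey : 1 - 8 / D = (b / a) ^ 2 := by
    rw [div_pow, eq_div_iff ha2pos.ne', sub_mul, one_mul, h8]
    ring
  have hAval : Aval ρ1 ρ2 φ = b / a := by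
    rw [Aval, ← hc, ← hD, hkey, Real.sqrt_sq (by positivity)]
  rw [hAval]
  congr 1
  rw [div_eq_div_iff (sub_ne_zero.mpr hba.ne') (sub_ne_zero.mpr ((div_lt_one hapos).mpr hba).ne')]
  field_simp
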